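/- For every pair of integers (n, m) with n ≥ 1 and n − 1 ≤ m ≤ 2^n, there exists a union-closed family S of subsets of [n] = {1,...,n} that separates every pair of distinct elements of [n], has exactly m members, and has weight w(S) ≤ (m · log₂ m)/2 + n(n+1)/2 + m. -/

import Mathlib

open Finset

lemma two_mul_sum_card_powerset (I : Finset ℕ) :
    2 * ∑ A ∈ I.powerset, A.card = I.card * 2 ^ I.card := by
  induction I using Finset.induction with
  | empty => simp
  | @insert a I ha ih =>
    rw [Finset.powerset_insert, Finset.sum_union, Finset.sum_image]
    · have h1 : ∑ B ∈ I.powerset, (insert a B).card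
          = (∑ B ∈ I.powerset, B.card) + 2 ^ I.card := by
        have : ∀ B ∈ I.powerset, (insert a B).card = B.card + 1 := by
          intro B hB
          rw [Finset.mem_powerset] at hB
          rw [Finset.card_insert_of_notMem (fun h => ha (hB h))]
        rw [Finset.sum_congr rfl this, Finset.sum_add_distrib, Finset.sum_const,
          smul_eq_mul, mul_one, Finset.card_powerset]
      rw [h1, Finset.card_insert_of_notMem ha, pow_succ]
      ring_nf
      nlinarith [ih]
    · intro x hx y hy hxy
      rw [Finset.mem_coe, Finset.mem_powerset] at hx hy
      have : (insert a x).erase a = (insert a y).erase a := by rw [hxy]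
      rwa [Finset.erase_insert (fun h => ha (hx h)),
        Finset.erase_insert (fun h => ha (hy h))] at this
    · rw [Finset.disjoint_left]
      intro A hA hA2
      rw [Finset.mem_powerset] at hA
      simp only [Finset.mem_image] at hA2
      obtain ⟨B, _, rfl⟩ := hA2
      exact ha (hA (Finset.mem_insert_self a B))

/-- Half-cube at level `l` of width `t`: all subsets of `[l, l+t-1]` containing `l`. -/
def HC (l t : ℕ) : Finset (Finset ℕ) :=
  (Finset.Icc (l + 1) (l + t - 1)).powerset.image (insert l)

lemma HC_subset {l t : ℕ} (ht : 1 ≤ t) {A : Finset ℕ} (hA : A ∈ HC l t) :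
    A ⊆ Finset.Icc l (l + t - 1) := by
  simp only [HC, Finset.mem_image] at hA
  obtain ⟨B, hB, rfl⟩ := hA
  rw [Finset.mem_powerset] at hB
  intro x hx
  rcases Finset.mem_insert.1 hx with rfl | hx2
  · rw [Finset.mem_Icc]; omega
  · have := hB hx2
    rw [Finset.mem_Icc] at this ⊢
    omega

lemma mem_of_mem_HC {l t : ℕ} {A : Finset ℕ} (hA : A ∈ HC l t) : l ∈ A := by
  simp only [HC, Finset.mem_image] at hA
  obtain ⟨B, _, rfl⟩ := hA
  exact Finset.mem_insert_self l B

lemma HC_card (l t : ℕ) : (HC l t).card = 2 ^ (t - 1) := by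
  rw [HC, Finset.card_image_of_injOn, Finset.card_powerset, Nat.card_Icc]
  · congr 1
    omega
  · intro x hx y hy hxy
    rw [Finset.mem_coe, Finset.mem_powerset] at hx hy
    have hx1 : l ∉ x := fun h => by have := hx h; rw [Finset.mem_Icc] at this; omega
    have hy1 : l ∉ y := fun h => by have := hy h; rw [Finset.mem_Icc] at this; omega
    have : (insert l x).erase l = (insert l y).erase l := by rw [hxy]
    rwa [Finset.erase_insert hx1, Finset.erase_insert hy1] at this

lemma HC_weight {l t : ℕ} (ht : 1 ≤ t) :
    2 * ∑ A ∈ HC l t, A.card = (t - 1) * 2 ^ (t - 1) + 2 ^ t := by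
  obtain ⟨u, rfl⟩ : ∃ u, t = u + 1 := ⟨t - 1, by omega⟩
  have hI : l + (u + 1) - 1 = l + u := by omega
  have hcardI : (Finset.Icc (l + 1) (l + u)).card = u := by
    rw [Nat.card_Icc]; omega
  have hinj : ∀ x ∈ (Finset.Icc (l + 1) (l + u)).powerset,
      ∀ y ∈ (Finset.Icc (l + 1) (l + u)).powerset, insert l x = insert l y → x = y := by
    intro x hx y hy hxy
    rw [Finset.mem_powerset] at hx hy
    have hx1 : l ∉ x := fun h => by have := hx h; rw [Finset.mem_Icc] at this; omega
    have hy1 : l ∉ y := fun h => by have := hy h; rw [Finset.mem_Icc] at this; omega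
    have : (insert l x).erase l = (insert l y).erase l := by rw [hxy]
    rwa [Finset.erase_insert hx1, Finset.erase_insert hy1] at this
  rw [HC, hI, Finset.sum_image hinj]
  have h1 : ∀ B ∈ (Finset.Icc (l + 1) (l + u)).powerset, (insert l B).card = B.card + 1 := by
    intro B hB
    rw [Finset.mem_powerset] at hB
    have : l ∉ B := fun h => by have := hB h; rw [Finset.mem_Icc] at this; omega
    rw [Finset.card_insert_of_notMem this]
  rw [Finset.sum_congr rfl h1, Finset.sum_add_distrib, Finset.sum_const, smul_eq_mul, mul_one,
    Finset.card_powerset, hcardI, Nat.mul_add, two_mul_sum_card_powerset, hcardI]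
  simp only [Nat.add_sub_cancel, pow_succ]
  ring

lemma HC_absorb {l t : ℕ} {A C : Finset ℕ} (hA : A ∈ HC l t)
    (hC : C ⊆ Finset.Icc l (l + t - 1)) : A ∪ C ∈ HC l t := by
  simp only [HC, Finset.mem_image] at hA ⊢
  obtain ⟨B, hB, rfl⟩ := hA
  rw [Finset.mem_powerset] at hB
  refine ⟨B ∪ C.erase l, ?_, ?_⟩
  · rw [Finset.mem_powerset]
    intro x hx
    rcases Finset.mem_union.1 hx with hx1 | hx2
    · exact hB hx1
    · have hxl := Finset.ne_of_mem_erase hx2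
      have := hC (Finset.mem_of_mem_erase hx2)
      rw [Finset.mem_Icc] at this ⊢
      omega
  · ext x
    simp only [Finset.mem_union, Finset.mem_insert, Finset.mem_erase]
    rcases eq_or_ne x l with rfl | hne
    · tauto
    · tauto

/-- Recursive union-closed family of size `s` sitting inside `[l, l + ⌈log₂ s⌉ - 1]`. -/
def Bfam : ℕ → ℕ → Finset (Finset ℕ)
  | _, 0 => ∅
  | _, 1 => {∅}
  | l, (s + 2) =>
    HC l (Nat.clog 2 (s + 2)) ∪ Bfam (l + 1) (s + 2 - 2 ^ (Nat.clog 2 (s + 2) - 1))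
  termination_by _ s => s
  decreasing_by
    have : 0 < 2 ^ (Nat.clog 2 (s + 2) - 1) := by positivity
    omega

lemma clog_facts {s : ℕ} (hs : 2 ≤ s) :
    1 ≤ Nat.clog 2 s ∧ 2 ^ (Nat.clog 2 s - 1) < s ∧ s ≤ 2 ^ Nat.clog 2 s := by
  have h1 : s ≤ 2 ^ Nat.clog 2 s := Nat.le_pow_clog (by norm_num) s
  have h2 : 2 ^ (Nat.clog 2 s - 1) < s := Nat.pow_pred_clog_lt_self (by norm_num) (by omega)
  have h3 : 1 ≤ Nat.clog 2 s := by
    by_contra h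
    have : Nat.clog 2 s = 0 := by omega
    rw [this] at h1
    simp at h1
    omega
  exact ⟨h3, h2, h1⟩

lemma Bfam_subset : ∀ s l (A : Finset ℕ), A ∈ Bfam l s →
    A ⊆ Finset.Icc l (l + Nat.clog 2 s - 1) := by
  intro s
  induction s using Nat.strong_induction_on with
  | _ s ih =>
    intro l A hA
    match s with
    | 0 => rw [Bfam] at hA; exact absurd hA (Finset.notMem_empty _)
    | 1 =>
      rw [Bfam, Finset.mem_singleton] at hA
      subst hA
      exact Finset.empty_subset _
    | (s + 2) =>
      rw [Bfam] at hA
      obtain ⟨ht, hlt, hle⟩ := clog_facts (s := s + 2) (by omega)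
      set t := Nat.clog 2 (s + 2) with htdef
      rcases Finset.mem_union.1 hA with h | h
      · exact HC_subset ht h
      · have hs' : s + 2 - 2 ^ (t - 1) < s + 2 := by
          have : 0 < 2 ^ (t - 1) := (by positivity)
          omega
        have hsub := ih _ hs' (l + 1) A h
        have hclog : Nat.clog 2 (s + 2 - 2 ^ (t - 1)) ≤ t - 1 := by
          rw [Nat.clog_le_iff_le_pow (by norm_num)]
          have h2t : 2 ^ (t - 1) * 2 = 2 ^ t := by
            rw [← pow_succ, Nat.sub_add_cancel ht]
          omega
        refine hsub.trans (Finset.Icc_subset_Icc (by omega) (by omega))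

lemma Bfam_step_facts {s : ℕ} :
    1 ≤ Nat.clog 2 (s + 2) ∧ 2 ^ (Nat.clog 2 (s + 2) - 1) < s + 2 ∧
      s + 2 - 2 ^ (Nat.clog 2 (s + 2) - 1) ≤ 2 ^ (Nat.clog 2 (s + 2) - 1) ∧
      Nat.clog 2 (s + 2 - 2 ^ (Nat.clog 2 (s + 2) - 1)) ≤ Nat.clog 2 (s + 2) - 1 := by
  obtain ⟨ht, hlt, hle⟩ := clog_facts (s := s + 2) (by omega)
  set t := Nat.clog 2 (s + 2) with htdef
  have h2t : 2 ^ (t - 1) * 2 = 2 ^ t := by rw [← pow_succ, Nat.sub_add_cancel ht]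
  have hs'le : s + 2 - 2 ^ (t - 1) ≤ 2 ^ (t - 1) := by omega
  refine ⟨ht, hlt, hs'le, ?_⟩
  rw [Nat.clog_le_iff_le_pow (by norm_num)]
  exact hs'le

lemma Bfam_disj {s l : ℕ} :
    Disjoint (HC l (Nat.clog 2 (s + 2))) (Bfam (l + 1) (s + 2 - 2 ^ (Nat.clog 2 (s + 2) - 1))) := by
  rw [Finset.disjoint_left]
  intro A hA hA2
  have hl : l ∈ A := mem_of_mem_HC hA
  have := Bfam_subset _ _ _ hA2 hl
  rw [Finset.mem_Icc] at this
  omega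

lemma Bfam_card : ∀ s l, (Bfam l s).card = s := by
  intro s
  induction s using Nat.strong_induction_on with
  | _ s ih =>
    intro l
    match s with
    | 0 => rw [Bfam]; simp
    | 1 => rw [Bfam]; simp
    | (s + 2) =>
      obtain ⟨ht, hlt, hs'le, hclog⟩ := Bfam_step_facts (s := s)
      rw [Bfam, Finset.card_union_of_disjoint Bfam_disj, HC_card,
        ih _ (by have : 0 < 2 ^ (Nat.clog 2 (s + 2) - 1) := (by positivity); omega)]
      omega

lemma Bfam_unionClosed : ∀ s l (A B : Finset ℕ), A ∈ Bfam l s → B ∈ Bfam l s →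
    A ∪ B ∈ Bfam l s := by
  intro s
  induction s using Nat.strong_induction_on with
  | _ s ih =>
    intro l A B hA hB
    match s with
    | 0 => rw [Bfam] at hA; exact absurd hA (Finset.notMem_empty _)
    | 1 =>
      rw [Bfam, Finset.mem_singleton] at hA hB ⊢
      subst hA; subst hB; simp
    | (s + 2) =>
      obtain ⟨ht, hlt, hs'le, hclog⟩ := Bfam_step_facts (s := s)
      set t := Nat.clog 2 (s + 2) with htdef
      have hsub : ∀ C : Finset ℕ, C ∈ Bfam l (s + 2) → C ⊆ Finset.Icc l (l + t - 1) := by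
        intro C hC
        have := Bfam_subset (s + 2) l C hC
        rwa [← htdef] at this
      rw [Bfam] at hA hB ⊢
      rcases Finset.mem_union.1 hA with h1 | h1
      · refine Finset.mem_union_left _ (HC_absorb h1 ?_)
        apply hsub
        rw [Bfam]
        exact hB
      · rcases Finset.mem_union.1 hB with h2 | h2
        · rw [Finset.union_comm A B]
          refine Finset.mem_union_left _ (HC_absorb h2 ?_)
          apply hsub
          rw [Bfam]
          exact Finset.mem_union_right _ h1
        · have hs' : s + 2 - 2 ^ (t - 1) < s + 2 := by omega
          exact Finset.mem_union_right _ (ih _ hs' (l + 1) A B h1 h2)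

lemma Bfam_weight : ∀ s l, 2 * ∑ A ∈ Bfam l s, A.card ≤ s * (Nat.clog 2 s + 1) := by
  intro s
  induction s using Nat.strong_induction_on with
  | _ s ih =>
    intro l
    match s with
    | 0 => rw [Bfam]; simp
    | 1 => rw [Bfam]; simp
    | (s + 2) =>
      obtain ⟨ht, hlt, hs'le, hclog⟩ := Bfam_step_facts (s := s)
      have hs'lt : s + 2 - 2 ^ (Nat.clog 2 (s + 2) - 1) < s + 2 := by
        have : 0 < 2 ^ (Nat.clog 2 (s + 2) - 1) := (by positivity)
        omega
      have h1 : 2 * ∑ A ∈ Bfam (l + 1) (s + 2 - 2 ^ (Nat.clog 2 (s + 2) - 1)), A.card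
          ≤ (s + 2 - 2 ^ (Nat.clog 2 (s + 2) - 1)) * Nat.clog 2 (s + 2) := by
        refine (ih _ hs'lt (l + 1)).trans ?_
        exact Nat.mul_le_mul_left _ (by omega)
      rw [Bfam, Finset.sum_union Bfam_disj, Nat.mul_add, HC_weight ht]
      obtain ⟨u, hu⟩ : ∃ u, Nat.clog 2 (s + 2) = u + 1 :=
        ⟨Nat.clog 2 (s + 2) - 1, (Nat.sub_add_cancel ht).symm⟩
      rw [hu] at hlt hs'le h1 ⊢
      simp only [Nat.add_sub_cancel] at hlt hs'le h1 ⊢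
      -- atoms
      set σ := ∑ A ∈ Bfam (l + 1) (s + 2 - 2 ^ u), A.card with hσ
      set p := 2 ^ u with hp
      set q := s + 2 - p with hq
      have hpq : p + q = s + 2 := by
        have : p ≤ s + 2 := le_of_lt hlt
        omega
      have hid : (p + q) * (u + 1 + 1) = u * p + p * 2 + (q * (u + 1) + q) := by ring
      have hpow : p ^ 1 * 2 = p * 2 := by ring
      calc u * p + 2 ^ (u + 1) + 2 * σ
          = u * p + p * 2 + 2 * σ := by rw [pow_succ]
        _ ≤ u * p + p * 2 + q * (u + 1) := by omega
        _ ≤ (p + q) * (u + 1 + 1) := by omega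
        _ = (s + 2) * (u + 1 + 1) := by rw [hpq]

lemma gauss_Icc (j : ℕ) : 2 * ∑ x ∈ Finset.Icc 1 j, x = j * (j + 1) := by
  induction j with
  | zero => simp
  | succ j ih =>
    rw [Finset.sum_Icc_succ_top (by omega), Nat.mul_add, ih]
    have : (j + 1) * (j + 1 + 1) = j * (j + 1) + 2 * (j + 1) := by ring
    omega

lemma construction (n k s : ℕ) (hk1 : 1 ≤ k) (hkn : k ≤ n) (hs : s ≤ 2 ^ (k - 1))
    (m : ℕ) (hmdef : m = 2 ^ (k - 1) + s + (n - k)) :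
    ∃ S : Finset (Finset ℕ),
      (∀ A ∈ S, A ⊆ Finset.Icc 1 n) ∧
      (∀ A ∈ S, ∀ B ∈ S, A ∪ B ∈ S) ∧
      (∀ i ∈ Finset.Icc 1 n, ∀ j ∈ Finset.Icc 1 n, i ≠ j →
        ∃ A ∈ S, (i ∈ A ∧ j ∉ A) ∨ (j ∈ A ∧ i ∉ A)) ∧
      S.card = m ∧
      (∑ A ∈ S, (A.card : ℝ))
        ≤ (m : ℝ) * Real.logb 2 m / 2 + (n : ℝ) * ((n : ℝ) + 1) / 2 + m := by
  classical
  set C : Finset (Finset ℕ) := (Finset.Icc (k + 1) n).image (fun j => Finset.Icc 1 j) with hC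
  set S : Finset (Finset ℕ) := C ∪ HC 1 k ∪ Bfam 2 s with hS
  -- basic subset facts
  have hclogs : Nat.clog 2 s ≤ k - 1 := (Nat.clog_le_iff_le_pow (by norm_num)).2 hs
  have hBk : ∀ A ∈ Bfam 2 s, A ⊆ Finset.Icc 2 k := by
    intro A hA
    refine (Bfam_subset s 2 A hA).trans (Finset.Icc_subset_Icc le_rfl (by omega))
  have hHk : ∀ A ∈ HC 1 k, A ⊆ Finset.Icc 1 k := by
    intro A hA
    have := HC_subset hk1 hA
    rwa [show 1 + k - 1 = k by omega] at this
  have hlow : ∀ A, A ∈ HC 1 k ∪ Bfam 2 s → A ⊆ Finset.Icc 1 k := by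
    intro A hA
    rcases Finset.mem_union.1 hA with h | h
    · exact hHk A h
    · exact (hBk A h).trans (Finset.Icc_subset_Icc (by omega) le_rfl)
  have hPk_mem : Finset.Icc 1 k ∈ HC 1 k := by
    rw [HC]
    refine Finset.mem_image.2 ⟨Finset.Icc 2 k, Finset.mem_powerset.2 ?_, ?_⟩
    · rw [show 1 + 1 = 2 by rfl, show 1 + k - 1 = k by omega]
    · ext x
      simp only [Finset.mem_insert, Finset.mem_Icc]
      omega
  have hPmem : ∀ j, k ≤ j → j ≤ n → Finset.Icc 1 j ∈ S := by
    intro j h1 h2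
    rcases eq_or_lt_of_le h1 with rfl | hlt
    · exact Finset.mem_union_left _ (Finset.mem_union_right _ hPk_mem)
    · refine Finset.mem_union_left _ (Finset.mem_union_left _ ?_)
      exact Finset.mem_image.2 ⟨j, Finset.mem_Icc.2 ⟨hlt, h2⟩, rfl⟩
  have hmemC : ∀ A ∈ C, ∃ a, k + 1 ≤ a ∧ a ≤ n ∧ A = Finset.Icc 1 a := by
    intro A hA
    obtain ⟨a, ha, rfl⟩ := Finset.mem_image.1 hA
    rw [Finset.mem_Icc] at ha
    exact ⟨a, ha.1, ha.2, rfl⟩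
  have hd1 : Disjoint C (HC 1 k) := by
    rw [Finset.disjoint_left]
    intro A hA hA2
    obtain ⟨a, ha1, _, rfl⟩ := hmemC A hA
    have : a ∈ Finset.Icc 1 k := hHk _ hA2 (Finset.mem_Icc.2 ⟨by omega, le_rfl⟩)
    rw [Finset.mem_Icc] at this
    omega
  have hd2 : Disjoint C (Bfam 2 s) := by
    rw [Finset.disjoint_left]
    intro A hA hA2
    obtain ⟨a, ha1, _, rfl⟩ := hmemC A hA
    have : a ∈ Finset.Icc 2 k := hBk _ hA2 (Finset.mem_Icc.2 ⟨by omega, le_rfl⟩)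
    rw [Finset.mem_Icc] at this
    omega
  have hd3 : Disjoint (HC 1 k) (Bfam 2 s) := by
    rw [Finset.disjoint_left]
    intro A hA hA2
    have h1 : (1 : ℕ) ∈ A := mem_of_mem_HC hA
    have := hBk _ hA2 h1
    rw [Finset.mem_Icc] at this
    omega
  have hCinj2 : ∀ a ∈ Finset.Icc (k + 1) n, ∀ b ∈ Finset.Icc (k + 1) n,
      Finset.Icc 1 a = Finset.Icc 1 b → a = b := by
    intro a ha b hb hab
    rw [Finset.mem_Icc] at ha hb
    have h1 : a ∈ Finset.Icc 1 b := by rw [← hab, Finset.mem_Icc]; omega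
    have h2 : b ∈ Finset.Icc 1 a := by rw [hab, Finset.mem_Icc]; omega
    rw [Finset.mem_Icc] at h1 h2
    omega
  refine ⟨S, ?_, ?_, ?_, ?_, ?_⟩
  -- (1) subsets of [n]
  · intro A hA
    rcases Finset.mem_union.1 hA with hA' | hB
    · rcases Finset.mem_union.1 hA' with hc | hh
      · obtain ⟨a, _, ha2, rfl⟩ := hmemC A hc
        exact Finset.Icc_subset_Icc le_rfl ha2
      · exact (hHk A hh).trans (Finset.Icc_subset_Icc le_rfl hkn)
    · exact (hBk A hB).trans (Finset.Icc_subset_Icc (by omega) hkn)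
  -- (2) union-closed
  · intro A hA B hB
    rcases Finset.mem_union.1 hA with hA' | hAB
    · rcases Finset.mem_union.1 hA' with hAc | hAh
      · -- A in chain
        obtain ⟨a, ha1, ha2, rfl⟩ := hmemC A hAc
        rcases Finset.mem_union.1 hB with hB' | hBB
        · rcases Finset.mem_union.1 hB' with hBc | hBh
          · obtain ⟨b, hb1, hb2, rfl⟩ := hmemC B hBc
            have : Finset.Icc 1 a ∪ Finset.Icc 1 b = Finset.Icc 1 (max a b) := by
              ext x
              simp only [Finset.mem_union, Finset.mem_Icc]
              omega
            rw [this]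
            exact hPmem _ (by omega) (by omega)
          · have : Finset.Icc 1 a ∪ B = Finset.Icc 1 a := by
              refine Finset.union_eq_left.2 ?_
              exact (hHk B hBh).trans (Finset.Icc_subset_Icc le_rfl (by omega))
            rw [this]
            exact hPmem a (by omega) ha2
        · have : Finset.Icc 1 a ∪ B = Finset.Icc 1 a := by
            refine Finset.union_eq_left.2 ?_
            exact (hBk B hBB).trans (Finset.Icc_subset_Icc (by omega) (by omega))
          rw [this]
          exact hPmem a (by omega) ha2
      · -- A in halfcube
        rcases Finset.mem_union.1 hB with hB' | hBB
        · rcases Finset.mem_union.1 hB' with hBc | hBh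
          · obtain ⟨b, hb1, hb2, rfl⟩ := hmemC B hBc
            have : A ∪ Finset.Icc 1 b = Finset.Icc 1 b := by
              refine Finset.union_eq_right.2 ?_
              exact (hHk A hAh).trans (Finset.Icc_subset_Icc le_rfl (by omega))
            rw [this]
            exact hPmem b (by omega) hb2
          · refine Finset.mem_union_left _ (Finset.mem_union_right _ ?_)
            refine HC_absorb hAh ?_
            have := hHk B hBh
            rwa [show 1 + k - 1 = k by omega]
        · refine Finset.mem_union_left _ (Finset.mem_union_right _ ?_)
          refine HC_absorb hAh ?_
          rw [show 1 + k - 1 = k by omega]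
          exact hlow B (Finset.mem_union_right _ hBB)
    · -- A in Bfam
      rcases Finset.mem_union.1 hB with hB' | hBB
      · rcases Finset.mem_union.1 hB' with hBc | hBh
        · obtain ⟨b, hb1, hb2, rfl⟩ := hmemC B hBc
          have : A ∪ Finset.Icc 1 b = Finset.Icc 1 b := by
            refine Finset.union_eq_right.2 ?_
            exact (hBk A hAB).trans (Finset.Icc_subset_Icc (by omega) (by omega))
          rw [this]
          exact hPmem b (by omega) hb2
        · rw [Finset.union_comm A B]
          refine Finset.mem_union_left _ (Finset.mem_union_right _ ?_)
          refine HC_absorb hBh ?_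
          rw [show 1 + k - 1 = k by omega]
          exact hlow A (Finset.mem_union_right _ hAB)
      · exact Finset.mem_union_right _ (Bfam_unionClosed s 2 A B hAB hBB)
  -- (3) separation
  · have hsep : ∀ i j, 1 ≤ i → i < j → j ≤ n → ∃ A ∈ S, i ∈ A ∧ j ∉ A := by
      intro i j hi hij hjn
      rcases le_or_gt j k with hjk | hkj
      · -- use {1, i}
        refine ⟨insert 1 (({i} : Finset ℕ).erase 1), ?_, ?_, ?_⟩
        · refine Finset.mem_union_left _ (Finset.mem_union_right _ ?_)
          rw [HC]
          refine Finset.mem_image.2 ⟨({i} : Finset ℕ).erase 1, Finset.mem_powerset.2 ?_, rfl⟩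
          intro x hx
          have hx1 := Finset.ne_of_mem_erase hx
          have hx2 := Finset.mem_singleton.1 (Finset.mem_of_mem_erase hx)
          rw [Finset.mem_Icc]
          omega
        · rcases eq_or_ne i 1 with rfl | hne
          · exact Finset.mem_insert_self 1 _
          · exact Finset.mem_insert_of_mem (Finset.mem_erase.2 ⟨hne, Finset.mem_singleton_self i⟩)
        · intro h
          rcases Finset.mem_insert.1 h with h1 | h2
          · omega
          · have := Finset.mem_singleton.1 (Finset.mem_of_mem_erase h2)
            omega
      · refine ⟨Finset.Icc 1 (j - 1), hPmem (j - 1) (by omega) (by omega), ?_, ?_⟩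
        · rw [Finset.mem_Icc]; omega
        · rw [Finset.mem_Icc]; omega
    intro i hi j hj hne
    rw [Finset.mem_Icc] at hi hj
    rcases lt_or_gt_of_ne hne with h | h
    · obtain ⟨A, hAS, h1, h2⟩ := hsep i j (by omega) h (by omega)
      exact ⟨A, hAS, Or.inl ⟨h1, h2⟩⟩
    · obtain ⟨A, hAS, h1, h2⟩ := hsep j i (by omega) h (by omega)
      exact ⟨A, hAS, Or.inr ⟨h1, h2⟩⟩
  -- (4) cardinality
  · have hCinj : Set.InjOn (fun j => Finset.Icc 1 j) (Finset.Icc (k + 1) n) := by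
      intro a ha b hb hab
      rw [Finset.mem_coe] at ha hb
      exact hCinj2 a ha b hb hab
    have hCcard : C.card = n - k := by
      rw [hC, Finset.card_image_of_injOn hCinj, Nat.card_Icc]
      omega
    rw [hS, Finset.card_union_of_disjoint (Finset.disjoint_union_left.2 ⟨hd2, hd3⟩),
      Finset.card_union_of_disjoint hd1, hCcard, HC_card, Bfam_card]
    omega
  -- (5) weight
  · have hsum : ∑ A ∈ S, A.card
        = (∑ j ∈ Finset.Icc (k + 1) n, j) + ((∑ A ∈ HC 1 k, A.card)
          + ∑ A ∈ Bfam 2 s, A.card) := by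
      rw [hS, Finset.union_assoc,
        Finset.sum_union (Finset.disjoint_union_right.2 ⟨hd1, hd2⟩),
        Finset.sum_union hd3, hC, Finset.sum_image hCinj2]
      congr 1
      refine Finset.sum_congr rfl fun j hj => ?_
      rw [Nat.card_Icc]
      omega
    have hgn := gauss_Icc n
    have hgk := gauss_Icc k
    have hsplit : (∑ x ∈ Finset.Icc 1 k, x) + ∑ x ∈ Finset.Icc (k + 1) n, x
        = ∑ x ∈ Finset.Icc 1 n, x := by
      rw [← Finset.sum_union]
      · congr 1
        ext x
        simp only [Finset.mem_union, Finset.mem_Icc]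
        omega
      · rw [Finset.disjoint_left]
        intro a ha ha2
        rw [Finset.mem_Icc] at ha ha2
        omega
    have hHW := HC_weight (l := 1) hk1
    have hBW : 2 * ∑ A ∈ Bfam 2 s, A.card ≤ s * k := by
      refine (Bfam_weight s 2).trans (Nat.mul_le_mul_left _ ?_)
      omega
    have h2k : 2 ^ (k - 1) * 2 = 2 ^ k := by
      rw [← pow_succ, Nat.sub_add_cancel hk1]
    have hsk1 : s * (k - 1) + 2 * s = s * (k + 1) := by
      have e : k - 1 + 2 = k + 1 := by omega
      calc s * (k - 1) + 2 * s = s * (k - 1 + 2) := by ring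
        _ = s * (k + 1) := by rw [e]
    have hsk2 : s * k ≤ s * (k + 1) := Nat.mul_le_mul_left _ (by omega)
    have key : 2 * (∑ A ∈ S, A.card) + k * (k + 1)
        ≤ n * (n + 1) + ((k - 1) * 2 ^ (k - 1) + s * (k - 1))
          + (2 * 2 ^ (k - 1) + 2 * s) := by
      rw [hsum]
      omega
    -- now pass to the reals
    have hpm : 2 ^ (k - 1) + s ≤ m := by omega
    have hkm : (2 : ℝ) ^ (k - 1) ≤ (m : ℝ) := by
      have h' : 2 ^ (k - 1) ≤ m := by omega
      exact_mod_cast h'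
    have hlogb : ((k : ℝ) - 1) ≤ Real.logb 2 (m : ℝ) := by
      have h1 : Real.logb 2 ((2 : ℝ) ^ (k - 1)) = ((k - 1 : ℕ) : ℝ) := by
        rw [Real.logb_pow, Real.logb_self_eq_one (by norm_num), mul_one]
      have h2 : Real.logb 2 ((2 : ℝ) ^ (k - 1)) ≤ Real.logb 2 (m : ℝ) :=
        Real.logb_le_logb_of_le one_lt_two (by positivity) hkm
      rw [h1, Nat.cast_sub hk1] at h2
      simpa using h2
    have hmul : (((2 ^ (k - 1) + s : ℕ)) : ℝ) * ((k : ℝ) - 1)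
        ≤ (m : ℝ) * Real.logb 2 (m : ℝ) := by
      refine mul_le_mul ?_ hlogb ?_ ?_
      · exact_mod_cast hpm
      · have : (1 : ℝ) ≤ (k : ℝ) := by exact_mod_cast hk1
        linarith
      · positivity
    have hcast : ∑ A ∈ S, ((A.card : ℝ)) = ((∑ A ∈ S, A.card : ℕ) : ℝ) := by
      push_cast
      rfl
    rw [hcast]
    have keyR : 2 * ((∑ A ∈ S, A.card : ℕ) : ℝ) + (k : ℝ) * ((k : ℝ) + 1)
        ≤ (n : ℝ) * ((n : ℝ) + 1) + (((k : ℝ) - 1) * (2 : ℝ) ^ (k - 1)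
          + (s : ℝ) * ((k : ℝ) - 1)) + (2 * (2 : ℝ) ^ (k - 1) + 2 * (s : ℝ)) := by
      have := key
      have hc : (((2 * (∑ A ∈ S, A.card) + k * (k + 1) : ℕ)) : ℝ)
          ≤ ((n * (n + 1) + ((k - 1) * 2 ^ (k - 1) + s * (k - 1))
            + (2 * 2 ^ (k - 1) + 2 * s) : ℕ) : ℝ) := by exact_mod_cast this
      push_cast [Nat.cast_sub hk1] at hc
      linarith
    have hexp : ((k : ℝ) - 1) * (2 : ℝ) ^ (k - 1) + (s : ℝ) * ((k : ℝ) - 1)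
        = (((2 ^ (k - 1) + s : ℕ)) : ℝ) * ((k : ℝ) - 1) := by
      push_cast
      ring
    have hpm' : (((2 ^ (k - 1) + s : ℕ)) : ℝ) ≤ (m : ℝ) := by exact_mod_cast hpm
    have hk0 : (0 : ℝ) ≤ (k : ℝ) * ((k : ℝ) + 1) := by positivity
    have hpow : (0:ℝ) < (2:ℝ) ^ (k-1) := by positivity
    push_cast at hmul hpm' hexp
    linarith [keyR, hmul, hexp, hpm', hk0]


/-- For every satisfiable pair `(n, m)` (i.e. `n ≥ 1` and `n - 1 ≤ m ≤ 2^n`)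
there is an `n`-separating union-closed family on `[n]` of size `m` with
weight at most `m·log₂ m / 2 + n(n+1)/2 + m`. -/
theorem exists_separating_unionClosed_small_weight (n m : ℕ)
    (hn : 1 ≤ n) (hmn : n - 1 ≤ m) (hm : m ≤ 2 ^ n) :
    ∃ S : Finset (Finset ℕ),
      (∀ A ∈ S, A ⊆ Finset.Icc 1 n) ∧
      (∀ A ∈ S, ∀ B ∈ S, A ∪ B ∈ S) ∧
      (∀ i ∈ Finset.Icc 1 n, ∀ j ∈ Finset.Icc 1 n, i ≠ j →
        ∃ A ∈ S, (i ∈ A ∧ j ∉ A) ∨ (j ∈ A ∧ i ∉ A)) ∧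
      S.card = m ∧
      (∑ A ∈ S, (A.card : ℝ))
        ≤ (m : ℝ) * Real.logb 2 m / 2 + (n : ℝ) * ((n : ℝ) + 1) / 2 + m := by
  classical
  rcases Nat.lt_or_ge m n with hlt | hge
  · -- here m = n - 1 : use the chain of prefixes [1], [2], ..., [n-1]
    have hm' : m = n - 1 := by omega
    set S : Finset (Finset ℕ) := (Finset.Icc 1 (n - 1)).image (fun j => Finset.Icc 1 j) with hS
    have hmemS : ∀ A ∈ S, ∃ a, 1 ≤ a ∧ a ≤ n - 1 ∧ A = Finset.Icc 1 a := by
      intro A hA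
      obtain ⟨a, ha, rfl⟩ := Finset.mem_image.1 hA
      rw [Finset.mem_Icc] at ha
      exact ⟨a, ha.1, ha.2, rfl⟩
    have hmem : ∀ a, 1 ≤ a → a ≤ n - 1 → Finset.Icc 1 a ∈ S := by
      intro a h1 h2
      exact Finset.mem_image.2 ⟨a, Finset.mem_Icc.2 ⟨h1, h2⟩, rfl⟩
    refine ⟨S, ?_, ?_, ?_, ?_, ?_⟩
    · intro A hA
      obtain ⟨a, _, ha2, rfl⟩ := hmemS A hA
      exact Finset.Icc_subset_Icc le_rfl (by omega)
    · intro A hA B hB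
      obtain ⟨a, ha1, ha2, rfl⟩ := hmemS A hA
      obtain ⟨b, hb1, hb2, rfl⟩ := hmemS B hB
      have : Finset.Icc 1 a ∪ Finset.Icc 1 b = Finset.Icc 1 (max a b) := by
        ext x
        simp only [Finset.mem_union, Finset.mem_Icc]
        omega
      rw [this]
      exact hmem _ (by omega) (by omega)
    · have hsep : ∀ i j, 1 ≤ i → i < j → j ≤ n → ∃ A ∈ S, i ∈ A ∧ j ∉ A := by
        intro i j hi hij hjn
        refine ⟨Finset.Icc 1 i, hmem i hi (by omega), ?_, ?_⟩
        · rw [Finset.mem_Icc]; omega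
        · rw [Finset.mem_Icc]; omega
      intro i hi j hj hne
      rw [Finset.mem_Icc] at hi hj
      rcases lt_or_gt_of_ne hne with h | h
      · obtain ⟨A, hAS, h1, h2⟩ := hsep i j (by omega) h (by omega)
        exact ⟨A, hAS, Or.inl ⟨h1, h2⟩⟩
      · obtain ⟨A, hAS, h1, h2⟩ := hsep j i (by omega) h (by omega)
        exact ⟨A, hAS, Or.inr ⟨h1, h2⟩⟩
    · rw [hS, Finset.card_image_of_injOn, Nat.card_Icc]
      · omega
      · intro a ha b hb hab
        rw [Finset.mem_coe, Finset.mem_Icc] at ha hb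
        simp only at hab
        have h1 : a ∈ Finset.Icc 1 b := by rw [← hab, Finset.mem_Icc]; omega
        have h2 : b ∈ Finset.Icc 1 a := by rw [hab, Finset.mem_Icc]; omega
        rw [Finset.mem_Icc] at h1 h2
        omega
    · have hsum : ∑ A ∈ S, A.card = ∑ j ∈ Finset.Icc 1 (n - 1), j := by
        rw [hS, Finset.sum_image]
        · refine Finset.sum_congr rfl fun j hj => ?_
          rw [Nat.card_Icc]
          omega
        · intro a ha b hb hab
          rw [Finset.mem_coe, Finset.mem_Icc] at ha hb
          simp only at hab
          have h1 : a ∈ Finset.Icc 1 b := by rw [← hab, Finset.mem_Icc]; omega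
          have h2 : b ∈ Finset.Icc 1 a := by rw [hab, Finset.mem_Icc]; omega
          rw [Finset.mem_Icc] at h1 h2
          omega
      have hg := gauss_Icc (n - 1)
      have hkey : 2 * ∑ A ∈ S, A.card ≤ n * (n + 1) := by
        rw [hsum]
        have : (n - 1) * (n - 1 + 1) ≤ n * (n + 1) :=
          Nat.mul_le_mul (by omega) (by omega)
        omega
      have hcast : ∑ A ∈ S, ((A.card : ℝ)) = ((∑ A ∈ S, A.card : ℕ) : ℝ) := by
        push_cast
        rfl
      rw [hcast]
      have hkeyR : 2 * ((∑ A ∈ S, A.card : ℕ) : ℝ) ≤ (n : ℝ) * ((n : ℝ) + 1) := by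
        exact_mod_cast hkey
      have hlog0 : 0 ≤ (m : ℝ) * Real.logb 2 (m : ℝ) := by
        rcases Nat.eq_zero_or_pos m with rfl | hmpos
        · simp
        · refine mul_nonneg (by positivity) (Real.logb_nonneg one_lt_two ?_)
          exact_mod_cast hmpos
      have hm0 : (0 : ℝ) ≤ (m : ℝ) := by positivity
      linarith
  · -- main case : m ≥ n
    have hex : ∃ j, m + (j + 1) ≤ 2 ^ (j + 1) + n := by
      refine ⟨n - 1, ?_⟩
      have h1 : n - 1 + 1 = n := by omega
      rw [h1]
      omega
    set j := Nat.find hex with hj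
    set k := j + 1 with hk
    have hkQ : m + k ≤ 2 ^ k + n := Nat.find_spec hex
    have hk1 : 1 ≤ k := by omega
    have hkn : k ≤ n := by
      have : j ≤ n - 1 := Nat.find_min' hex (by
        have h1 : n - 1 + 1 = n := by omega
        rw [h1]
        omega)
      omega
    have hd_ge : 2 ^ (k - 1) + n ≤ m + k := by
      rcases Nat.eq_or_lt_of_le hk1 with h1 | h1
      · have : k - 1 = 0 := by omega
        rw [this]
        simp only [pow_zero]
        omega
      · have hj1 : 1 ≤ j := by omega
        have hmin := Nat.find_min hex (m := j - 1) (by omega)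
        have h2 : j - 1 + 1 = j := by omega
        rw [h2] at hmin
        have h3 : k - 1 = j := by omega
        rw [h3]
        omega
    set s := (m + k - n) - 2 ^ (k - 1) with hs_def
    have h2k : 2 ^ (k - 1) * 2 = 2 ^ k := by
      rw [← pow_succ, Nat.sub_add_cancel hk1]
    have hs : s ≤ 2 ^ (k - 1) := by omega
    have hmdef : m = 2 ^ (k - 1) + s + (n - k) := by omega
    exact construction n k s hk1 hkn hs m hmdef
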